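/- arXiv:1910.05105 — 5 statements merged into one kernel-verified Lean document; each statement's English description precedes it below -/
import Mathlib

section
/- For positive measures μ₁, μ₂, ν₁, ν₂ of finite mass on ℝ^d, the generalized Wasserstein distance is subadditive: W₁^{a,b}(μ₁ + μ₂, ν₁ + ν₂) ≤ W₁^{a,b}(μ₁, ν₁) + W₁^{a,b}(μ₂, ν₂). -/
open MeasureTheory ENNReal Filter

noncomputable section

variable {X : Type*} [MeasurableSpace X] [MetricSpace X]

/-- Classical 1-Wasserstein "distance" as infimum over couplings (`⊤` if no coupling). -/
def W1 (μ ν : Measure X) : ℝ≥0∞ :=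
  ⨅ (π : Measure (X × X)) (_ : π.map Prod.fst = μ ∧ π.map Prod.snd = ν),
    ∫⁻ p, edist p.1 p.2 ∂π

/-- Total-variation mass `|μ - ν|` of the difference of two positive measures. -/
def tvMass (μ ν : Measure X) : ℝ≥0∞ :=
  (μ Set.univ + ν Set.univ) - 2 * (μ ⊓ ν) Set.univ

/-- Generalized Wasserstein distance `W₁^{a,b}` on positive measures. -/
def genW (a b : ℝ) (μ ν : Measure X) : ℝ≥0∞ :=
  ⨅ (μ' : Measure X) (ν' : Measure X) (_ : μ' Set.univ = ν' Set.univ),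
    (ENNReal.ofReal a * (tvMass μ μ' + tvMass ν ν') + ENNReal.ofReal b * W1 μ' ν')

/-- Signed generalized Wasserstein distance `𝕎₁^{a,b}`. -/
def sW (a b : ℝ) (μ ν : SignedMeasure X) : ℝ≥0∞ :=
  genW a b (μ.toJordanDecomposition.posPart + ν.toJordanDecomposition.negPart)
           (μ.toJordanDecomposition.negPart + ν.toJordanDecomposition.posPart)

/-- The generalized Wasserstein norm `‖μ‖^{a,b}` on signed measures. -/
def sNorm (a b : ℝ) (μ : SignedMeasure X) : ℝ≥0∞ :=
  genW a b μ.toJordanDecomposition.posPart μ.toJordanDecomposition.negPart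

abbrev Euc (d : ℕ) := EuclideanSpace ℝ (Fin d)

end


private lemma tvMass_add_le {X : Type*} [MeasurableSpace X] (μ₁ μ₂ ν₁ ν₂ : Measure X) :
    tvMass (μ₁ + μ₂) (ν₁ + ν₂) ≤ tvMass μ₁ ν₁ + tvMass μ₂ ν₂ := by
  have hinf : (μ₁ ⊓ ν₁) + (μ₂ ⊓ ν₂) ≤ (μ₁ + μ₂) ⊓ (ν₁ + ν₂) :=
    le_inf (add_le_add inf_le_left inf_le_left) (add_le_add inf_le_right inf_le_right)
  have hinf' : (μ₁ ⊓ ν₁) Set.univ + (μ₂ ⊓ ν₂) Set.univ ≤ ((μ₁ + μ₂) ⊓ (ν₁ + ν₂)) Set.univ := by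
    simpa using Measure.le_iff'.1 hinf Set.univ
  calc tvMass (μ₁ + μ₂) (ν₁ + ν₂)
      ≤ ((μ₁ + μ₂) Set.univ + (ν₁ + ν₂) Set.univ)
        - 2 * ((μ₁ ⊓ ν₁) Set.univ + (μ₂ ⊓ ν₂) Set.univ) :=
        tsub_le_tsub_left (mul_le_mul' le_rfl hinf') _
    _ = (μ₁ Set.univ + ν₁ Set.univ) + (μ₂ Set.univ + ν₂ Set.univ)
        - (2 * (μ₁ ⊓ ν₁) Set.univ + 2 * (μ₂ ⊓ ν₂) Set.univ) := by
        simp only [Measure.add_apply]; ring_nf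
    _ ≤ tvMass μ₁ ν₁ + tvMass μ₂ ν₂ := add_tsub_add_le_tsub_add_tsub

private lemma W1_add_le {X : Type*} [MeasurableSpace X] [MetricSpace X]
    (μ₁ μ₂ ν₁ ν₂ : Measure X) :
    W1 (μ₁ + μ₂) (ν₁ + ν₂) ≤ W1 μ₁ ν₁ + W1 μ₂ ν₂ := by
  conv_rhs => rw [W1, W1]
  simp_rw [ENNReal.iInf_add, ENNReal.add_iInf]
  refine le_iInf fun π₁ => le_iInf fun h₁ => le_iInf fun π₂ => le_iInf fun h₂ => ?_
  refine le_trans (iInf₂_le (π₁ + π₂) ?_) ?_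
  · constructor
    · rw [Measure.map_add _ _ measurable_fst, h₁.1, h₂.1]
    · rw [Measure.map_add _ _ measurable_snd, h₁.2, h₂.2]
  · rw [lintegral_add_measure]

/-- subadditivity of the generalized Wasserstein distance. -/
theorem stmt3 {d : ℕ} (a b : ℝ) (ha : 0 < a) (hb : 0 < b)
    (mu1 mu2 nu1 nu2 : Measure (Euc d))
    [IsFiniteMeasure mu1] [IsFiniteMeasure mu2]
    [IsFiniteMeasure nu1] [IsFiniteMeasure nu2] :
    genW a b (mu1 + mu2) (nu1 + nu2) ≤ genW a b mu1 nu1 + genW a b mu2 nu2 := by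
  conv_rhs => rw [genW, genW]
  simp_rw [ENNReal.iInf_add, ENNReal.add_iInf]
  refine le_iInf fun μ₁' => le_iInf fun ν₁' => le_iInf fun h₁ =>
    le_iInf fun μ₂' => le_iInf fun ν₂' => le_iInf fun h₂ => ?_
  refine le_trans (iInf_le_of_le (μ₁' + μ₂') (iInf_le_of_le (ν₁' + ν₂') (iInf_le _ ?_))) ?_
  · simp [Measure.add_apply, h₁, h₂]
  · refine le_trans (add_le_add
      (mul_le_mul' le_rfl (add_le_add (tvMass_add_le mu1 mu2 μ₁' μ₂')
        (tvMass_add_le nu1 nu2 ν₁' ν₂')))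
      (mul_le_mul' le_rfl (W1_add_le μ₁' μ₂' ν₁' ν₂'))) (le_of_eq (by ring))
end

section
/- For λ > 0, the generalized Wasserstein distance satisfies the dilation identity W₁^{a,b}(D_λ#μ, D_λ#ν) = W₁^{a,λb}(μ, ν), where D_λ(x) = λx is the dilation map on ℝ^d. -/
open MeasureTheory ENNReal Filter

section Aux
variable {d : ℕ}

-- map by a measurable equiv commutes with ⊓
lemma map_inf_equiv {Y Z : Type*} [MeasurableSpace Y] [MeasurableSpace Z] (e : Y ≃ᵐ Z)
    (μ ν : Measure Y) : (μ ⊓ ν).map e = μ.map e ⊓ ν.map e := by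
  refine le_antisymm (le_inf (Measure.map_mono inf_le_left e.measurable)
    (Measure.map_mono inf_le_right e.measurable)) ?_
  have h1 : (μ.map e ⊓ ν.map e).map e.symm ≤ μ ⊓ ν := by
    refine le_inf ?_ ?_
    · have := Measure.map_mono (inf_le_left (a := μ.map e) (b := ν.map e)) e.symm.measurable
      rwa [e.map_symm_map] at this
    · have := Measure.map_mono (inf_le_right (a := μ.map e) (b := ν.map e)) e.symm.measurable
      rwa [e.map_symm_map] at this
  have := Measure.map_mono h1 e.measurable
  rwa [e.map_map_symm] at this

lemma map_univ_eq {Y Z : Type*} [MeasurableSpace Y] [MeasurableSpace Z] (e : Y ≃ᵐ Z)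
    (μ : Measure Y) : μ.map e Set.univ = μ Set.univ := by
  rw [Measure.map_apply e.measurable MeasurableSet.univ, Set.preimage_univ]

noncomputable def dilE (c : ℝ) (hc : c ≠ 0) : Euc d ≃ᵐ Euc d :=
  (Homeomorph.smulOfNeZero c hc).toMeasurableEquiv

lemma dilE_coe (c : ℝ) (hc : c ≠ 0) : ⇑(dilE (d := d) c hc) = fun x => c • x := rfl

lemma tvMass_map (c : ℝ) (hc : c ≠ 0) (μ ν : Measure (Euc d)) :
    tvMass (μ.map (fun x => c • x)) (ν.map (fun x => c • x)) = tvMass μ ν := by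
  have h := map_inf_equiv (dilE (d := d) c hc) μ ν
  rw [dilE_coe] at h
  rw [tvMass, tvMass, ← h]
  have e := dilE (d := d) c hc
  rw [show (fun x : Euc d => c • x) = ⇑(dilE (d := d) c hc) from rfl,
    map_univ_eq, map_univ_eq, map_univ_eq]

lemma W1_map_le (c : ℝ) (hc : 0 < c) (μ ν : Measure (Euc d)) :
    W1 (μ.map (fun x => c • x)) (ν.map (fun x => c • x)) ≤ ENNReal.ofReal c * W1 μ ν := by
  have hms : Measurable (fun x : Euc d => c • x) := measurable_const_smul c
  unfold W1
  rw [ENNReal.mul_iInf_of_ne (by simp [hc]) ofReal_ne_top]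
  refine le_iInf fun π => ?_
  by_cases hπ : π.map Prod.fst = μ ∧ π.map Prod.snd = ν
  · rw [iInf_pos hπ]
    have hg : Measurable (Prod.map (fun x : Euc d => c • x) (fun x : Euc d => c • x)) :=
      hms.prodMap hms
    refine iInf_le_of_le (π.map (Prod.map (fun x => c • x) (fun x => c • x)))
      (le_of_le_of_eq (iInf_le _ ⟨?_, ?_⟩) ?_)
    · rw [lintegral_map measurable_edist hg]
      simp only [Prod.map_fst, Prod.map_snd, edist_smul₀, ENNReal.smul_def, smul_eq_mul]
      rw [lintegral_const_mul _ measurable_edist]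
      congr 1
      simp [ENNReal.ofReal, Real.nnnorm_of_nonneg hc.le]
      exact NNReal.eq (by simp [Real.toNNReal_of_nonneg hc.le])
    · rw [Measure.map_map measurable_fst hg]
      have : Prod.fst ∘ Prod.map (fun x : Euc d => c • x) (fun x : Euc d => c • x)
          = (fun x : Euc d => c • x) ∘ Prod.fst := rfl
      rw [this, ← Measure.map_map hms measurable_fst, hπ.1]
    · rw [Measure.map_map measurable_snd hg]
      have : Prod.snd ∘ Prod.map (fun x : Euc d => c • x) (fun x : Euc d => c • x)
          = (fun x : Euc d => c • x) ∘ Prod.snd := rfl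
      rw [this, ← Measure.map_map hms measurable_snd, hπ.2]
  · rw [iInf_neg hπ, ENNReal.mul_top (by simp [hc])]
    exact le_top

lemma genW_map_le (a b c : ℝ) (hc : 0 < c) (μ ν : Measure (Euc d)) :
    genW a b (μ.map (fun x => c • x)) (ν.map (fun x => c • x)) ≤ genW a (c * b) μ ν := by
  unfold genW
  refine le_iInf fun μ' => le_iInf fun ν' => le_iInf fun h => ?_
  refine le_trans (iInf_le_of_le (μ'.map (fun x => c • x))
    (iInf_le_of_le (ν'.map (fun x => c • x)) (iInf_le _ ?_))) ?_
  · rw [show (fun x : Euc d => c • x) = ⇑(dilE (d := d) c hc.ne') from rfl,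
      map_univ_eq, map_univ_eq, h]
  · rw [tvMass_map c hc.ne', tvMass_map c hc.ne']
    refine add_le_add_right ?_ _
    refine le_trans (mul_le_mul_right (W1_map_le c hc μ' ν') _) ?_
    rw [← mul_assoc, mul_comm (ENNReal.ofReal b), ← ENNReal.ofReal_mul hc.le]

lemma map_map_inv (c : ℝ) (hc : c ≠ 0) (μ : Measure (Euc d)) :
    (μ.map (fun x => c • x)).map (fun x => c⁻¹ • x) = μ := by
  rw [Measure.map_map (measurable_const_smul _) (measurable_const_smul _)]
  have : ((fun x : Euc d => c⁻¹ • x) ∘ fun x => c • x) = id := by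
    funext x; simp [smul_smul, inv_mul_cancel₀ hc]
  rw [this, Measure.map_id]

end Aux

/-- dilation identity `W₁^{a,b}(D_λ#μ, D_λ#ν) = W₁^{a,λb}(μ,ν)`. -/
theorem stmt5 {d : ℕ} (a b lam : ℝ) (ha : 0 < a) (hb : 0 < b) (hlam : 0 < lam)
    (μ ν : Measure (Euc d)) [IsFiniteMeasure μ] [IsFiniteMeasure ν] :
    genW a b (μ.map (fun x => lam • x)) (ν.map (fun x => lam • x))
      = genW a (lam * b) μ ν := by
  refine le_antisymm (genW_map_le a b lam hlam μ ν) ?_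
  have h := genW_map_le a (lam * b) lam⁻¹ (by positivity)
    (μ.map (fun x => lam • x)) (ν.map (fun x => lam • x))
  rw [map_map_inv lam hlam.ne' μ, map_map_inv lam hlam.ne' ν] at h
  rw [← mul_assoc, inv_mul_cancel₀ hlam.ne', one_mul] at h
  exact h
end

section
/- The sequence of signed measures ν_n = δ_n − δ_{n+1/n} on ℝ satisfies ‖ν_n‖^{a,b} → 0 as n → ∞ (indeed ‖ν_n‖^{a,b} = b/n for n large), yet the sequence (ν_n) is not tight (the Jordan positive parts escape to infinity). -/
open MeasureTheory ENNReal Filter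

noncomputable section Aux

/-- Upper bound: `genW a b δ_x δ_y ≤ b * dist x y` (take `μ' = δ_x`, `ν' = δ_y` and the
obvious coupling). -/
lemma genW_le_aux (a b : ℝ) (hb : 0 ≤ b) (x y : ℝ) :
    genW a b (Measure.dirac x) (Measure.dirac y) ≤ ENNReal.ofReal (b * dist x y) := by
  have h1 : W1 (Measure.dirac x) (Measure.dirac y) ≤ edist x y := by
    refine iInf_le_of_le (Measure.dirac (x, y)) (iInf_le_of_le ⟨?_, ?_⟩ ?_)
    · rw [Measure.map_dirac' measurable_fst]
    · rw [Measure.map_dirac' measurable_snd]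
    · rw [lintegral_dirac]
  have htv : ∀ μ : Measure ℝ, tvMass μ μ = 0 := by
    intro μ
    simp [tvMass, inf_idem, two_mul]
  calc genW a b (Measure.dirac x) (Measure.dirac y)
      ≤ ENNReal.ofReal a * (tvMass (Measure.dirac x) (Measure.dirac x)
          + tvMass (Measure.dirac y) (Measure.dirac y))
        + ENNReal.ofReal b * W1 (Measure.dirac x) (Measure.dirac y) := by
        refine iInf_le_of_le (Measure.dirac x) (iInf_le_of_le (Measure.dirac y)
          (iInf_le_of_le ?_ le_rfl))
        simp
    _ ≤ ENNReal.ofReal b * edist x y := by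
        rw [htv, htv]; simpa using mul_le_mul_right h1 _
    _ = ENNReal.ofReal (b * dist x y) := by
        rw [edist_dist, ← ENNReal.ofReal_mul hb]

/-- If `φ ≤ c` pointwise then `∫ φ dρ ≤ c * (ρ(univ) - (ρ ⊓ τ)(univ)) + ∫ φ dτ`. -/
lemma lintegral_le_inf_aux (c : ℝ≥0∞) (φ : ℝ → ℝ≥0∞) (hφ : ∀ u, φ u ≤ c)
    (ρ τ : Measure ℝ) [IsFiniteMeasure ρ] :
    ∫⁻ u, φ u ∂ρ ≤ c * (ρ Set.univ - (ρ ⊓ τ) Set.univ) + ∫⁻ u, φ u ∂τ := by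
  haveI : IsFiniteMeasure (ρ ⊓ τ) := isFiniteMeasure_of_le ρ inf_le_left
  have h1 : (ρ - (ρ ⊓ τ)) + (ρ ⊓ τ) = ρ := Measure.sub_add_cancel_of_le inf_le_left
  calc ∫⁻ u, φ u ∂ρ
      = ∫⁻ u, φ u ∂(ρ - (ρ ⊓ τ)) + ∫⁻ u, φ u ∂(ρ ⊓ τ) := by
        rw [← lintegral_add_measure, h1]
    _ ≤ c * (ρ Set.univ - (ρ ⊓ τ) Set.univ) + ∫⁻ u, φ u ∂τ := by
        gcongr
        · calc ∫⁻ u, φ u ∂(ρ - (ρ ⊓ τ)) ≤ ∫⁻ _, c ∂(ρ - (ρ ⊓ τ)) := lintegral_mono hφ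
            _ = c * (ρ - (ρ ⊓ τ)) Set.univ := lintegral_const c
            _ = c * (ρ Set.univ - (ρ ⊓ τ) Set.univ) := by
                rw [Measure.sub_apply MeasurableSet.univ inf_le_left]
        · exact inf_le_right

/-- ENNReal arithmetic used in the lower bound. -/
lemma stepE_aux (a : ℝ) (ha : 0 < a) (s t M : ℝ≥0∞) (hs1 : s ≤ 1) (hsM : s ≤ M)
    (ht1 : t ≤ 1) (htM : t ≤ M) :
    ENNReal.ofReal (2 * a) * ((1 - s) + (M - t))
      ≤ ENNReal.ofReal a * (((1 + M) - 2 * s) + ((1 + M) - 2 * t)) := by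
  have ha0 : ENNReal.ofReal a ≠ 0 := (ENNReal.ofReal_pos.2 ha).ne'
  have hs : s ≠ ⊤ := (hs1.trans_lt ENNReal.one_lt_top).ne
  have ht : t ≠ ⊤ := (ht1.trans_lt ENNReal.one_lt_top).ne
  rcases eq_or_ne M ⊤ with hM | hM
  · have h2s : 2 * s ≠ ⊤ := ENNReal.mul_ne_top (by simp) hs
    have h' : (1 + M) - 2 * s = ⊤ := by
      subst hM; rw [add_top, ENNReal.top_sub h2s]
    rw [h', top_add, ENNReal.mul_top ha0]
    exact le_top
  · have e1 : (1 + M) - 2 * s = (1 - s) + (M - s) := by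
      refine ENNReal.sub_eq_of_eq_add (ENNReal.mul_ne_top (by simp) hs) ?_
      rw [two_mul]
      calc 1 + M = ((1 - s) + s) + ((M - s) + s) := by
            rw [tsub_add_cancel_of_le hs1, tsub_add_cancel_of_le hsM]
        _ = (1 - s) + (M - s) + (s + s) := by ring
    have e2 : (1 + M) - 2 * t = (1 - t) + (M - t) := by
      refine ENNReal.sub_eq_of_eq_add (ENNReal.mul_ne_top (by simp) ht) ?_
      rw [two_mul]
      calc 1 + M = ((1 - t) + t) + ((M - t) + t) := by
            rw [tsub_add_cancel_of_le ht1, tsub_add_cancel_of_le htM]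
        _ = (1 - t) + (M - t) + (t + t) := by ring
    have e3 : (1 - s) + (M - t) = (M - s) + (1 - t) := by
      have hst : s + t ≠ ⊤ := ENNReal.add_ne_top.2 ⟨hs, ht⟩
      apply (ENNReal.add_left_inj hst).1
      calc (1 - s) + (M - t) + (s + t) = ((1 - s) + s) + ((M - t) + t) := by ring
        _ = 1 + M := by rw [tsub_add_cancel_of_le hs1, tsub_add_cancel_of_le htM]
        _ = ((M - s) + s) + ((1 - t) + t) := by
            rw [tsub_add_cancel_of_le hsM, tsub_add_cancel_of_le ht1, add_comm]
        _ = (M - s) + (1 - t) + (s + t) := by ring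
    rw [e1, e2]
    have h2a : ENNReal.ofReal (2 * a) = 2 * ENNReal.ofReal a := by
      rw [ENNReal.ofReal_mul (by norm_num : (0:ℝ) ≤ 2)]
      norm_num
    rw [h2a, mul_comm (2 : ℝ≥0∞), mul_assoc]
    refine mul_le_mul_right (le_of_eq ?_) _
    calc 2 * ((1 - s) + (M - t)) = ((1 - s) + (M - t)) + ((M - s) + (1 - t)) := by
          rw [two_mul]; nth_rewrite 2 [e3]; rfl
      _ = (1 - s) + (M - s) + ((1 - t) + (M - t)) := by ring

/-- Lower bound: `genW a b δ_x δ_y ≥ b * dist x y` provided `b * dist x y ≤ 2a`. -/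
lemma genW_ge_aux (a b : ℝ) (ha : 0 < a) (hb : 0 < b) (x y : ℝ)
    (hab : b * dist x y ≤ 2 * a) :
    ENNReal.ofReal (b * dist x y) ≤ genW a b (Measure.dirac x) (Measure.dirac y) := by
  refine le_iInf fun μ' => le_iInf fun ν' => le_iInf fun hM => ?_
  have hdx : (Measure.dirac x) Set.univ = 1 := measure_univ
  have hdy : (Measure.dirac y) Set.univ = 1 := measure_univ
  rcases eq_or_ne (ν' Set.univ) ⊤ with hν | hν
  · have h2 : (Measure.dirac y ⊓ ν') Set.univ ≤ 1 := by
      simpa using Measure.le_iff'.1 (inf_le_left :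
        Measure.dirac y ⊓ ν' ≤ Measure.dirac y) Set.univ
    have : tvMass (Measure.dirac y) ν' = ⊤ := by
      rw [tvMass, hdy, hν, add_top, ENNReal.top_sub]
      exact ENNReal.mul_ne_top (by simp) (h2.trans_lt ENNReal.one_lt_top).ne
    rw [this]
    have ha0 : ENNReal.ofReal a ≠ 0 := (ENNReal.ofReal_pos.2 ha).ne'
    rw [add_top, ENNReal.mul_top ha0, top_add]
    exact le_top
  haveI : IsFiniteMeasure ν' := ⟨hν.lt_top⟩
  set m := ENNReal.ofReal (b * dist x y) with hm
  set φ : ℝ → ℝ≥0∞ := fun u => min (ENNReal.ofReal b * edist u y) m with hφ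
  have hφmeas : Measurable φ :=
    (((continuous_id.edist continuous_const).measurable).const_mul _).min measurable_const
  have hφx : φ x = m := by
    simp only [hφ]
    rw [edist_dist, ← ENNReal.ofReal_mul hb.le, min_self]
  have hφy : φ y = 0 := by simp [hφ]
  have hφc : ∀ u, φ u ≤ ENNReal.ofReal (2 * a) := fun u =>
    le_trans (min_le_right _ _) (ENNReal.ofReal_le_ofReal hab)
  have hφlip : ∀ u v : ℝ, φ u ≤ φ v + ENNReal.ofReal b * edist u v := by
    intro u v
    have h1 : ENNReal.ofReal b * edist u y
        ≤ ENNReal.ofReal b * edist v y + ENNReal.ofReal b * edist u v := by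
      rw [← mul_add]
      exact mul_le_mul_right ((edist_triangle u v y).trans (le_of_eq (add_comm _ _))) _
    calc φ u ≤ min (ENNReal.ofReal b * edist v y + ENNReal.ofReal b * edist u v)
          (m + ENNReal.ofReal b * edist u v) :=
        le_min ((min_le_left _ _).trans h1) ((min_le_right _ _).trans le_self_add)
      _ = φ v + ENNReal.ofReal b * edist u v := by rw [min_add_add_right]
  -- transport bound
  have hC : ∫⁻ u, φ u ∂μ' ≤ ∫⁻ u, φ u ∂ν' + ENNReal.ofReal b * W1 μ' ν' := by
    have hb0 : ENNReal.ofReal b ≠ 0 := (ENNReal.ofReal_pos.2 hb).ne'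
    rw [W1]
    rw [ENNReal.mul_iInf_of_ne hb0 ENNReal.ofReal_ne_top]
    simp_rw [ENNReal.mul_iInf_of_ne hb0 ENNReal.ofReal_ne_top, ENNReal.add_iInf]
    refine le_iInf fun π => le_iInf fun hπ => ?_
    calc ∫⁻ u, φ u ∂μ' = ∫⁻ p, φ p.1 ∂π := by
          rw [← hπ.1, lintegral_map hφmeas measurable_fst]
      _ ≤ ∫⁻ p, (φ p.2 + ENNReal.ofReal b * edist p.1 p.2) ∂π :=
          lintegral_mono fun p => hφlip p.1 p.2
      _ = ∫⁻ p, φ p.2 ∂π + ENNReal.ofReal b * ∫⁻ p, edist p.1 p.2 ∂π := by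
          rw [lintegral_add_left (f := fun p : ℝ × ℝ => φ p.2) (hφmeas.comp measurable_snd),
            lintegral_const_mul _ continuous_edist.measurable]
      _ = ∫⁻ u, φ u ∂ν' + ENNReal.ofReal b * ∫⁻ p, edist p.1 p.2 ∂π := by
          rw [← hπ.2, lintegral_map hφmeas measurable_snd]
  -- splitting off the diagonal parts
  have hA := lintegral_le_inf_aux (ENNReal.ofReal (2 * a)) φ hφc (Measure.dirac x) μ'
  have hD := lintegral_le_inf_aux (ENNReal.ofReal (2 * a)) φ hφc ν' (Measure.dirac y)
  rw [lintegral_dirac x φ, hφx] at hA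
  rw [lintegral_dirac y φ, hφy] at hD
  have hσ1le : (Measure.dirac x ⊓ μ') Set.univ ≤ (1 : ℝ≥0∞) := by
    simpa using Measure.le_iff'.1 (inf_le_left : Measure.dirac x ⊓ μ' ≤ Measure.dirac x) Set.univ
  have hσ1le' : (Measure.dirac x ⊓ μ') Set.univ ≤ μ' Set.univ :=
    Measure.le_iff'.1 inf_le_right Set.univ
  have hσ2le : (ν' ⊓ Measure.dirac y) Set.univ ≤ (1 : ℝ≥0∞) := by
    simpa using Measure.le_iff'.1 (inf_le_right : ν' ⊓ Measure.dirac y ≤ Measure.dirac y) Set.univ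
  have hσ2le' : (ν' ⊓ Measure.dirac y) Set.univ ≤ ν' Set.univ :=
    Measure.le_iff'.1 inf_le_left Set.univ
  have key : m ≤ ENNReal.ofReal (2 * a) * ((1 - (Measure.dirac x ⊓ μ') Set.univ)
      + (ν' Set.univ - (ν' ⊓ Measure.dirac y) Set.univ)) + ENNReal.ofReal b * W1 μ' ν' := by
    calc m ≤ ENNReal.ofReal (2 * a) * ((Measure.dirac x) Set.univ
            - (Measure.dirac x ⊓ μ') Set.univ) + ∫⁻ u, φ u ∂μ' := hA
      _ ≤ ENNReal.ofReal (2 * a) * (1 - (Measure.dirac x ⊓ μ') Set.univ)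
          + (∫⁻ u, φ u ∂ν' + ENNReal.ofReal b * W1 μ' ν') := by
          rw [hdx]; exact add_le_add_right hC _
      _ ≤ ENNReal.ofReal (2 * a) * (1 - (Measure.dirac x ⊓ μ') Set.univ)
          + ((ENNReal.ofReal (2 * a) * (ν' Set.univ - (ν' ⊓ Measure.dirac y) Set.univ) + 0)
            + ENNReal.ofReal b * W1 μ' ν') := by
          gcongr
      _ = ENNReal.ofReal (2 * a) * ((1 - (Measure.dirac x ⊓ μ') Set.univ)
          + (ν' Set.univ - (ν' ⊓ Measure.dirac y) Set.univ)) + ENNReal.ofReal b * W1 μ' ν' := by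
          rw [add_zero, mul_add]; ring
  refine key.trans ?_
  refine add_le_add_left ?_ _
  rw [tvMass, tvMass, hdx, hdy]
  have := stepE_aux a ha ((Measure.dirac x ⊓ μ') Set.univ) ((ν' ⊓ Measure.dirac y) Set.univ)
    (μ' Set.univ) hσ1le hσ1le' hσ2le (hM ▸ hσ2le')
  calc ENNReal.ofReal (2 * a) * ((1 - (Measure.dirac x ⊓ μ') Set.univ)
        + (ν' Set.univ - (ν' ⊓ Measure.dirac y) Set.univ))
      = ENNReal.ofReal (2 * a) * ((1 - (Measure.dirac x ⊓ μ') Set.univ)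
        + (μ' Set.univ - (ν' ⊓ Measure.dirac y) Set.univ)) := by rw [hM]
    _ ≤ ENNReal.ofReal a * (((1 + μ' Set.univ) - 2 * (Measure.dirac x ⊓ μ') Set.univ)
        + ((1 + μ' Set.univ) - 2 * (ν' ⊓ Measure.dirac y) Set.univ)) := this
    _ = ENNReal.ofReal a * ((1 + μ' Set.univ - 2 * (Measure.dirac x ⊓ μ') Set.univ)
        + (1 + ν' Set.univ - 2 * (Measure.dirac y ⊓ ν') Set.univ)) := by
        rw [hM, inf_comm ν' (Measure.dirac y)]

lemma dirac_mutuallySingular_aux {x y : ℝ} (hxy : x ≠ y) :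
    Measure.dirac x ⟂ₘ Measure.dirac y := by
  refine ⟨{y}, measurableSet_singleton y, ?_, ?_⟩
  · simp [Measure.dirac_apply, hxy]
  · simp [Measure.dirac_apply]

lemma jordan_dirac_aux {x y : ℝ} (hxy : x ≠ y) :
    ((Measure.dirac x).toSignedMeasure - (Measure.dirac y).toSignedMeasure).toJordanDecomposition
      = ⟨Measure.dirac x, Measure.dirac y, dirac_mutuallySingular_aux hxy⟩ := by
  have h : (Measure.dirac x).toSignedMeasure - (Measure.dirac y).toSignedMeasure
      = (⟨Measure.dirac x, Measure.dirac y,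
          dirac_mutuallySingular_aux hxy⟩ : JordanDecomposition ℝ).toSignedMeasure := rfl
  rw [h, JordanDecomposition.toJordanDecomposition_toSignedMeasure]

end Aux

/-- `ν_n = δ_n - δ_{n+1/n}` satisfies `‖ν_n‖^{a,b} = b/n` for large
`n`, hence `‖ν_n‖^{a,b} → 0`, yet the sequence is not tight. -/
theorem stmt13 (a b : ℝ) (ha : 0 < a) (hb : 0 < b) :
    let νseq : ℕ → SignedMeasure ℝ := fun n =>
      (Measure.dirac (n : ℝ)).toSignedMeasure -
      (Measure.dirac ((n : ℝ) + 1 / (n : ℝ))).toSignedMeasure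
    (∀ᶠ n in atTop, sNorm a b (νseq n) = ENNReal.ofReal (b / (n : ℝ))) ∧
    Tendsto (fun n => sNorm a b (νseq n)) atTop (nhds 0) ∧
    ¬ (∀ ε : ℝ, 0 < ε → ∃ K : Set ℝ, IsCompact K ∧
        (∀ n, (νseq n).toJordanDecomposition.posPart Kᶜ < ENNReal.ofReal ε) ∧
        (∀ n, (νseq n).toJordanDecomposition.negPart Kᶜ < ENNReal.ofReal ε)) := by
  intro νseq
  have hne : ∀ n : ℕ, 1 ≤ n → ((n : ℝ) ≠ (n : ℝ) + 1 / (n : ℝ)) := by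
    intro n hn
    have hn0 : (0 : ℝ) < (n : ℝ) := by exact_mod_cast hn
    have : (0 : ℝ) < 1 / (n : ℝ) := by positivity
    linarith
  have hpos : ∀ n : ℕ, 1 ≤ n →
      (νseq n).toJordanDecomposition.posPart = Measure.dirac (n : ℝ) := by
    intro n hn
    show ((Measure.dirac (n : ℝ)).toSignedMeasure -
      (Measure.dirac ((n : ℝ) + 1 / (n : ℝ))).toSignedMeasure).toJordanDecomposition.posPart = _
    rw [jordan_dirac_aux (hne n hn)]
  have hneg : ∀ n : ℕ, 1 ≤ n →
      (νseq n).toJordanDecomposition.negPart = Measure.dirac ((n : ℝ) + 1 / (n : ℝ)) := by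
    intro n hn
    show ((Measure.dirac (n : ℝ)).toSignedMeasure -
      (Measure.dirac ((n : ℝ) + 1 / (n : ℝ))).toSignedMeasure).toJordanDecomposition.negPart = _
    rw [jordan_dirac_aux (hne n hn)]
  -- the eventual equality
  have part1 : ∀ᶠ n in atTop, sNorm a b (νseq n) = ENNReal.ofReal (b / (n : ℝ)) := by
    rw [eventually_atTop]
    refine ⟨max 1 ⌈b / (2 * a)⌉₊, fun n hn => ?_⟩
    have hn1 : 1 ≤ n := le_trans (le_max_left _ _) hn
    have hn0 : (0 : ℝ) < (n : ℝ) := by exact_mod_cast hn1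
    have hdist : dist (n : ℝ) ((n : ℝ) + 1 / (n : ℝ)) = 1 / (n : ℝ) := by
      rw [Real.dist_eq]
      have h' : (n : ℝ) - ((n : ℝ) + 1 / (n : ℝ)) = -(1 / (n : ℝ)) := by ring
      rw [h', abs_neg, abs_of_nonneg (by positivity)]
    have hab : b * dist (n : ℝ) ((n : ℝ) + 1 / (n : ℝ)) ≤ 2 * a := by
      rw [hdist, mul_one_div]
      have hceil : b / (2 * a) ≤ (n : ℝ) := by
        refine (Nat.le_ceil _).trans ?_
        exact_mod_cast le_trans (le_max_right _ _) hn
      rw [div_le_iff₀ hn0]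
      rw [div_le_iff₀ (by linarith : (0:ℝ) < 2 * a)] at hceil
      linarith [hceil]
    have hsn : sNorm a b (νseq n)
        = genW a b (Measure.dirac (n : ℝ)) (Measure.dirac ((n : ℝ) + 1 / (n : ℝ))) := by
      rw [sNorm, hpos n hn1, hneg n hn1]
    rw [hsn, le_antisymm (genW_le_aux a b hb.le _ _) (genW_ge_aux a b ha hb _ _ hab),
      hdist, mul_one_div]
  refine ⟨part1, ?_, ?_⟩
  -- convergence to zero
  · have h0 : Tendsto (fun n : ℕ => ENNReal.ofReal (b / (n : ℝ))) atTop (nhds 0) := by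
      rw [← ENNReal.ofReal_zero]
      exact ENNReal.tendsto_ofReal (tendsto_const_div_atTop_nhds_zero_nat b)
    exact h0.congr' (EventuallyEq.symm part1)
  -- non-tightness
  · intro h
    obtain ⟨K, hK, hposK, -⟩ := h 1 one_pos
    obtain ⟨u, hu⟩ := hK.bddAbove
    set n : ℕ := max 1 (⌊u⌋₊ + 1) with hn
    have hn1 : 1 ≤ n := le_max_left _ _
    have hnu : u < (n : ℝ) := by
      calc u < (⌊u⌋₊ : ℝ) + 1 := Nat.lt_floor_add_one u
        _ ≤ (n : ℝ) := by exact_mod_cast le_max_right 1 (⌊u⌋₊ + 1)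
    have hnK : (n : ℝ) ∉ K := fun hmem => absurd (hu hmem) (not_le.2 hnu)
    have hcon := hposK n
    rw [hpos n hn1] at hcon
    simp [Measure.dirac_apply, hnK] at hcon
end

section
/- The sequence μ_n = n δ_{1/n²} − n δ_{−1/n²} on ℝ satisfies ‖μ_n‖^{a,b} → 0 as n → ∞ (with ‖μ_n‖^{a,b} = 2bn/n² for n large), while the total masses |μ_n| = 2n are unbounded. Hence convergence to 0 in ‖·‖^{a,b} does not imply boundedness of total variation. -/
open MeasureTheory ENNReal Filter

noncomputable section Aux
open scoped NNReal

/-- The Jordan decomposition of `c δ_x - c δ_y`. -/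
noncomputable def jdOf (x y : ℝ) (hxy : x ≠ y) (c : ℝ≥0) : JordanDecomposition ℝ where
  posPart := c • Measure.dirac x
  negPart := c • Measure.dirac y
  mutuallySingular := by
    refine ⟨{y}, measurableSet_singleton y, ?_, ?_⟩
    · simp [Measure.dirac_apply' _ (measurableSet_singleton y), Set.indicator, hxy]
    · simp [Measure.dirac_apply' _ (measurableSet_singleton y).compl, Set.indicator, hxy]

theorem jd_eq (x y : ℝ) (hxy : x ≠ y) (c : ℝ≥0) :
    ((c : ℝ) • ((Measure.dirac x).toSignedMeasure -
      (Measure.dirac y).toSignedMeasure)).toJordanDecomposition = jdOf x y hxy c := by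
  apply MeasureTheory.SignedMeasure.toJordanDecomposition_eq
  ext i hi
  rw [JordanDecomposition.toSignedMeasure, Measure.toSignedMeasure_sub_apply hi,
    VectorMeasure.smul_apply, Measure.toSignedMeasure_sub_apply hi]
  simp [jdOf, Measure.dirac_apply' _ hi, mul_sub, ENNReal.smul_def, -Measure.coe_nnreal_smul, smul_eq_mul,
    ENNReal.toReal_mul]

theorem tvMass_self (μ : Measure ℝ) [IsFiniteMeasure μ] : tvMass μ μ = 0 := by
  simp [tvMass, inf_idem, two_mul, tsub_self,
    ENNReal.add_sub_cancel_right (measure_ne_top μ _)]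

theorem W1_le_dirac (x y : ℝ) (c : ℝ≥0) :
    W1 (c • Measure.dirac x) (c • Measure.dirac y) ≤ c * edist x y := by
  refine iInf_le_of_le (c • Measure.dirac (x, y)) (iInf_le_of_le ⟨?_, ?_⟩ ?_)
  · rw [Measure.map_smul, Measure.map_dirac' measurable_fst]
  · rw [Measure.map_smul, Measure.map_dirac' measurable_snd]
  · rw [ENNReal.smul_def, lintegral_smul_measure, lintegral_dirac' _ (by fun_prop)]; exact le_rfl

theorem genW_le (a b : ℝ) (x y : ℝ) (c : ℝ≥0) :
    genW a b (c • Measure.dirac x) (c • Measure.dirac y) ≤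
      ENNReal.ofReal b * ((c : ℝ≥0∞) * edist x y) := by
  refine iInf_le_of_le (c • Measure.dirac x) (iInf_le_of_le (c • Measure.dirac y)
    (iInf_le_of_le (by simp) ?_))
  rw [tvMass_self, tvMass_self]
  simpa using mul_le_mul_right (W1_le_dirac x y c) _

theorem tv_lb (x : ℝ) (c : ℝ≥0) (μ' : Measure ℝ) :
    (c : ℝ≥0∞) + μ' Set.univ ≤
      tvMass (c • Measure.dirac x) μ' + 2 * min (c : ℝ≥0∞) (μ' {x}) := by
  have hI : ((c • Measure.dirac x) ⊓ μ') Set.univ ≤ min (c : ℝ≥0∞) (μ' {x}) := by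
    have h1 : ((c • Measure.dirac x) ⊓ μ') Set.univ ≤
        ((c • Measure.dirac x) ⊓ μ') {x} + ((c • Measure.dirac x) ⊓ μ') {x}ᶜ := by
      rw [← Set.union_compl_self {x}]; exact measure_union_le _ _
    have h2 : ((c • Measure.dirac x) ⊓ μ') {x} ≤ min (c : ℝ≥0∞) (μ' {x}) := by
      refine le_min ?_ (Measure.le_iff'.1 inf_le_right _)
      calc ((c • Measure.dirac x) ⊓ μ') {x} ≤ (c • Measure.dirac x) {x} :=
            Measure.le_iff'.1 inf_le_left _
        _ = c := by simp [ENNReal.smul_def, -Measure.coe_nnreal_smul]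
    have h3 : ((c • Measure.dirac x) ⊓ μ') {x}ᶜ ≤ 0 := by
      calc ((c • Measure.dirac x) ⊓ μ') {x}ᶜ ≤ (c • Measure.dirac x) {x}ᶜ :=
            Measure.le_iff'.1 inf_le_left _
        _ = 0 := by simp [ENNReal.smul_def, -Measure.coe_nnreal_smul]
    calc ((c • Measure.dirac x) ⊓ μ') Set.univ ≤ _ + _ := h1
      _ ≤ min (c : ℝ≥0∞) (μ' {x}) + 0 := add_le_add h2 h3
      _ = _ := add_zero _
  have : (c : ℝ≥0∞) + μ' Set.univ =
      (c • Measure.dirac x) Set.univ + μ' Set.univ := by simp [ENNReal.smul_def, -Measure.coe_nnreal_smul]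
  rw [this]
  calc (c • Measure.dirac x) Set.univ + μ' Set.univ
      ≤ tvMass (c • Measure.dirac x) μ' + 2 * ((c • Measure.dirac x) ⊓ μ') Set.univ :=
        le_tsub_add
    _ ≤ _ := add_le_add le_rfl (mul_le_mul_right hI 2)

theorem coupling_lb (x y : ℝ) (μ' ν' : Measure ℝ) (π : Measure (ℝ × ℝ))
    (h1 : π.map Prod.fst = μ') (h2 : π.map Prod.snd = ν') :
    edist x y * ((μ' {x} + ν' {y}) - π Set.univ) ≤ ∫⁻ p, edist p.1 p.2 ∂π := by
  set A : Set (ℝ × ℝ) := {x} ×ˢ {y} with hA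
  have hAm : MeasurableSet A := (measurableSet_singleton x).prod (measurableSet_singleton y)
  have hπA : (μ' {x} + ν' {y}) - π Set.univ ≤ π A := by
    rw [tsub_le_iff_right]
    have hS : μ' {x} = π (Prod.fst ⁻¹' {x}) := by
      rw [← h1, Measure.map_apply measurable_fst (measurableSet_singleton x)]
    have hT : ν' {y} = π (Prod.snd ⁻¹' {y}) := by
      rw [← h2, Measure.map_apply measurable_snd (measurableSet_singleton y)]
    have hST : Prod.fst ⁻¹' {x} ∩ Prod.snd ⁻¹' {y} = A := by
      ext p; simp [hA, Set.mem_prod, Prod.ext_iff]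
    calc μ' {x} + ν' {y} = π (Prod.fst ⁻¹' {x}) + π (Prod.snd ⁻¹' {y}) := by rw [hS, hT]
      _ = π (Prod.fst ⁻¹' {x} ∪ Prod.snd ⁻¹' {y}) + π (Prod.fst ⁻¹' {x} ∩ Prod.snd ⁻¹' {y}) :=
          (measure_union_add_inter _ (measurable_snd (measurableSet_singleton y))).symm
      _ ≤ π Set.univ + π A := by rw [hST]; exact add_le_add (measure_mono (μ := π) (Set.subset_univ _)) le_rfl
      _ = π A + π Set.univ := add_comm _ _
  calc edist x y * ((μ' {x} + ν' {y}) - π Set.univ) ≤ edist x y * π A :=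
        mul_le_mul_right hπA _
    _ = ∫⁻ _ in A, edist x y ∂π := (setLIntegral_const _ _).symm
    _ = ∫⁻ p in A, edist p.1 p.2 ∂π := by
        refine setLIntegral_congr_fun_ae hAm (ae_of_all _ ?_)
        rintro ⟨p1, p2⟩ ⟨hp1, hp2⟩
        simp only [Set.mem_singleton_iff] at hp1 hp2
        rw [hp1, hp2]
    _ ≤ ∫⁻ p, edist p.1 p.2 ∂π := setLIntegral_le_lintegral _ _

set_option maxHeartbeats 2000000 in
theorem realIneq {a b d N M A B E₁ E₂ Wr : ℝ} (ha : 0 < a) (hb : 0 < b) (hd : 0 < d)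
    (hab : b * d ≤ 2 * a) (hA : 0 ≤ A) (hB : 0 ≤ B) (hAM : A ≤ M) (hBM : B ≤ M)
    (hN : 0 ≤ N) (hE₁ : N + M ≤ E₁ + 2 * min N A) (hE₂ : N + M ≤ E₂ + 2 * min N B)
    (hW : d * (A + B - M) ≤ Wr) (hW0 : 0 ≤ Wr) (hE₁0 : 0 ≤ E₁) (hE₂0 : 0 ≤ E₂) :
    b * N * d ≤ a * (E₁ + E₂) + b * Wr := by
  rcases le_total N A with h1 | h1 <;> rcases le_total N B with h2 | h2 <;>
    [rw [min_eq_left h1] at hE₁; rw [min_eq_left h1] at hE₁;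
     rw [min_eq_right h1] at hE₁; rw [min_eq_right h1] at hE₁] <;>
    [rw [min_eq_left h2] at hE₂; rw [min_eq_right h2] at hE₂;
     rw [min_eq_left h2] at hE₂; rw [min_eq_right h2] at hE₂] <;>
    rcases le_total (A + B) M with h3 | h3 <;>
    rcases le_total (A + B) (M + N) with h4 | h4 <;>
    nlinarith [mul_nonneg hb.le hW0, mul_nonneg ha.le hE₁0, mul_nonneg ha.le hE₂0,
      mul_le_mul_of_nonneg_right hab (sub_nonneg.2 hAM), mul_nonneg (mul_nonneg hb.le hd.le) hA,
      mul_le_mul_of_nonneg_right hab (sub_nonneg.2 hBM),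
      mul_nonneg (mul_nonneg hb.le hd.le) hB, mul_le_mul_of_nonneg_left hW hb.le,
      mul_pos hb hd]

theorem key (a b : ℝ) (ha : 0 < a) (hb : 0 < b) {x y : ℝ} (hxy : x ≠ y) (c : ℝ≥0)
    (hab : b * dist x y ≤ 2 * a) (μ' ν' : Measure ℝ) (hm : μ' Set.univ = ν' Set.univ)
    (hMtop : μ' Set.univ ≠ ⊤) (π : Measure (ℝ × ℝ)) (hπ1 : π.map Prod.fst = μ')
    (hπ2 : π.map Prod.snd = ν') :
    ENNReal.ofReal b * ((c : ℝ≥0∞) * edist x y) ≤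
      ENNReal.ofReal a * (tvMass (c • Measure.dirac x) μ' + tvMass (c • Measure.dirac y) ν')
        + ENNReal.ofReal b * ∫⁻ p, edist p.1 p.2 ∂π := by
  by_cases hint : ∫⁻ p, edist p.1 p.2 ∂π = ⊤
  · rw [hint, ENNReal.mul_top (by simpa using hb)]
    simp
  have hπuniv : π Set.univ = μ' Set.univ := by
    rw [← hπ1, Measure.map_apply measurable_fst MeasurableSet.univ, Set.preimage_univ]
  have hνuniv : ν' Set.univ = μ' Set.univ := hm.symm
  set e₁ := tvMass (c • Measure.dirac x) μ' with he₁def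
  set e₂ := tvMass (c • Measure.dirac y) ν' with he₂def
  have he₁ : e₁ ≠ ⊤ := by
    refine ne_top_of_le_ne_top ?_ (tsub_le_self : e₁ ≤ _)
    simp only [ENNReal.smul_def, Measure.smul_apply, smul_eq_mul, measure_univ, mul_one]
    exact ENNReal.add_ne_top.2 ⟨ENNReal.coe_ne_top, hMtop⟩
  have he₂ : e₂ ≠ ⊤ := by
    refine ne_top_of_le_ne_top ?_ (tsub_le_self : e₂ ≤ _)
    simp only [ENNReal.smul_def, Measure.smul_apply, smul_eq_mul, measure_univ, mul_one, hνuniv]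
    exact ENNReal.add_ne_top.2 ⟨ENNReal.coe_ne_top, hMtop⟩
  set N : ℝ := (c : ℝ)
  set d : ℝ := dist x y
  set M : ℝ := (μ' Set.univ).toReal
  set A : ℝ := (μ' {x}).toReal
  set B : ℝ := (ν' {y}).toReal
  set E₁ : ℝ := e₁.toReal
  set E₂ : ℝ := e₂.toReal
  set Wr : ℝ := (∫⁻ p, edist p.1 p.2 ∂π).toReal
  have hd : 0 < d := dist_pos.2 hxy
  have hμx : μ' {x} ≠ ⊤ := ne_top_of_le_ne_top hMtop (measure_mono (Set.subset_univ _))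
  have hνy : ν' {y} ≠ ⊤ := by
    rw [← hνuniv] at hMtop; exact ne_top_of_le_ne_top hMtop (measure_mono (Set.subset_univ _))
  have hAM : A ≤ M := ENNReal.toReal_mono hMtop (measure_mono (Set.subset_univ _))
  have hBM : B ≤ M := by
    have := ENNReal.toReal_mono (hνuniv ▸ hMtop) (measure_mono (Set.subset_univ {y}) : ν' {y} ≤ _)
    simpa [B, M, ← hνuniv] using this
  have hE₁r : N + M ≤ E₁ + 2 * min N A := by
    have h := tv_lb x c μ'
    have hfin : e₁ + 2 * min (c : ℝ≥0∞) (μ' {x}) ≠ ⊤ :=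
      ENNReal.add_ne_top.2 ⟨he₁, ENNReal.mul_ne_top (by simp)
        (ne_top_of_le_ne_top hμx (min_le_right _ _))⟩
    have := ENNReal.toReal_mono hfin h
    rwa [ENNReal.toReal_add ENNReal.coe_ne_top hMtop, ENNReal.toReal_add he₁
        (ENNReal.mul_ne_top (by simp) (ne_top_of_le_ne_top hμx (min_le_right _ _))),
      ENNReal.toReal_mul, ENNReal.toReal_min ENNReal.coe_ne_top hμx,
      ENNReal.coe_toReal, ENNReal.toReal_ofNat] at this
  have hE₂r : N + M ≤ E₂ + 2 * min N B := by
    have h := tv_lb y c ν'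
    rw [hνuniv] at h
    have hfin : e₂ + 2 * min (c : ℝ≥0∞) (ν' {y}) ≠ ⊤ :=
      ENNReal.add_ne_top.2 ⟨he₂, ENNReal.mul_ne_top (by simp)
        (ne_top_of_le_ne_top hνy (min_le_right _ _))⟩
    have := ENNReal.toReal_mono hfin h
    rwa [ENNReal.toReal_add ENNReal.coe_ne_top hMtop, ENNReal.toReal_add he₂
        (ENNReal.mul_ne_top (by simp) (ne_top_of_le_ne_top hνy (min_le_right _ _))),
      ENNReal.toReal_mul, ENNReal.toReal_min ENNReal.coe_ne_top hνy,
      ENNReal.coe_toReal, ENNReal.toReal_ofNat] at this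
  have hWr : d * (A + B - M) ≤ Wr := by
    have h := coupling_lb x y μ' ν' π hπ1 hπ2
    rw [hπuniv] at h
    have h' := ENNReal.toReal_mono hint h
    rw [ENNReal.toReal_mul] at h'
    have hsubfin : (μ' {x} + ν' {y}) - μ' Set.univ ≠ ⊤ :=
      ne_top_of_le_ne_top (ENNReal.add_ne_top.2 ⟨hμx, hνy⟩) tsub_le_self
    have h'' : A + B - M ≤ ((μ' {x} + ν' {y}) - μ' Set.univ).toReal := by
      have hle : μ' {x} + ν' {y} ≤ ((μ' {x} + ν' {y}) - μ' Set.univ) + μ' Set.univ :=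
        le_tsub_add
      have := ENNReal.toReal_mono (ENNReal.add_ne_top.2 ⟨hsubfin, hMtop⟩) hle
      rw [ENNReal.toReal_add hμx hνy, ENNReal.toReal_add hsubfin hMtop] at this
      linarith
    calc d * (A + B - M) ≤ d * ((μ' {x} + ν' {y}) - μ' Set.univ).toReal :=
          mul_le_mul_of_nonneg_left h'' dist_nonneg
      _ ≤ Wr := by rw [edist_dist x y, ENNReal.toReal_ofReal dist_nonneg] at h'; exact h'
  have hkey : b * N * d ≤ a * (E₁ + E₂) + b * Wr :=
    realIneq ha hb hd hab ENNReal.toReal_nonneg ENNReal.toReal_nonneg hAM hBM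
      (by positivity) hE₁r hE₂r hWr ENNReal.toReal_nonneg ENNReal.toReal_nonneg
      ENNReal.toReal_nonneg
  have hRfin : ENNReal.ofReal a * (e₁ + e₂) + ENNReal.ofReal b * ∫⁻ p, edist p.1 p.2 ∂π ≠ ⊤ :=
    ENNReal.add_ne_top.2 ⟨ENNReal.mul_ne_top ENNReal.ofReal_ne_top
      (ENNReal.add_ne_top.2 ⟨he₁, he₂⟩), ENNReal.mul_ne_top ENNReal.ofReal_ne_top hint⟩
  rw [← ENNReal.toReal_le_toReal (by simp [edist_ne_top, ENNReal.mul_ne_top]) hRfin]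
  rw [ENNReal.toReal_mul, ENNReal.toReal_mul, ENNReal.toReal_add
      (ENNReal.mul_ne_top ENNReal.ofReal_ne_top (ENNReal.add_ne_top.2 ⟨he₁, he₂⟩))
      (ENNReal.mul_ne_top ENNReal.ofReal_ne_top hint),
    ENNReal.toReal_mul, ENNReal.toReal_mul, ENNReal.toReal_add he₁ he₂,
    ENNReal.toReal_ofReal ha.le, ENNReal.toReal_ofReal hb.le, ENNReal.coe_toReal,
    edist_dist, ENNReal.toReal_ofReal dist_nonneg]
  calc b * (N * d) = b * N * d := by ring
    _ ≤ a * (E₁ + E₂) + b * Wr := hkey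

theorem genW_ge (a b : ℝ) (ha : 0 < a) (hb : 0 < b) {x y : ℝ} (hxy : x ≠ y) (c : ℝ≥0)
    (hab : b * dist x y ≤ 2 * a) :
    ENNReal.ofReal b * ((c : ℝ≥0∞) * edist x y) ≤
      genW a b (c • Measure.dirac x) (c • Measure.dirac y) := by
  refine le_iInf fun μ' => le_iInf fun ν' => le_iInf fun hm => ?_
  by_cases hMtop : μ' Set.univ = ⊤
  · have htv : tvMass (c • Measure.dirac x) μ' = ⊤ := by
      rw [tvMass, ENNReal.sub_eq_top_iff]
      constructor
      · simp [hMtop]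
      · refine ENNReal.mul_ne_top (by simp) ?_
        have : ((c • Measure.dirac x) ⊓ μ') Set.univ ≤ (c • Measure.dirac x) Set.univ :=
          Measure.le_iff'.1 inf_le_left _
        refine ne_top_of_le_ne_top ?_ this
        simp [ENNReal.smul_def, -Measure.coe_nnreal_smul]
    rw [htv]
    simp only [top_add, ENNReal.mul_top (show ENNReal.ofReal a ≠ 0 by simpa using ha)]
    exact le_top
  have hb0 : ENNReal.ofReal b ≠ 0 := by simpa using hb
  rw [W1, ENNReal.mul_iInf_of_ne hb0 ENNReal.ofReal_ne_top, ENNReal.add_iInf]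
  refine le_iInf fun π => ?_
  rw [ENNReal.mul_iInf_of_ne hb0 ENNReal.ofReal_ne_top, ENNReal.add_iInf]
  refine le_iInf fun hπ => ?_
  exact key a b ha hb hxy c hab μ' ν' hm hMtop π hπ.1 hπ.2

theorem genW_eq (a b : ℝ) (ha : 0 < a) (hb : 0 < b) {x y : ℝ} (hxy : x ≠ y) (c : ℝ≥0)
    (hab : b * dist x y ≤ 2 * a) :
    genW a b (c • Measure.dirac x) (c • Measure.dirac y) =
      ENNReal.ofReal b * ((c : ℝ≥0∞) * edist x y) :=
  le_antisymm (genW_le a b x y c) (genW_ge a b ha hb hxy c hab)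

end Aux

open scoped NNReal

theorem jd_eq' (x y : ℝ) (hxy : x ≠ y) (n : ℕ) :
    (((n : ℕ) : ℝ) • ((Measure.dirac x).toSignedMeasure -
      (Measure.dirac y).toSignedMeasure)).toJordanDecomposition = jdOf x y hxy (n : ℝ≥0) := by
  have h := jd_eq x y hxy (n : ℝ≥0)
  rwa [NNReal.coe_natCast] at h

set_option maxHeartbeats 1000000

/-- `μ_n = n δ_{1/n²} - n δ_{-1/n²}` satisfies
`‖μ_n‖^{a,b} = 2bn/n²` for large `n`, hence `‖μ_n‖^{a,b} → 0`, while the total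
masses `|μ_n| = 2n` are unbounded. -/
theorem stmt14 (a b : ℝ) (ha : 0 < a) (hb : 0 < b) :
    let μseq : ℕ → SignedMeasure ℝ := fun n =>
      (n : ℝ) • ((Measure.dirac (1 / (n : ℝ) ^ 2)).toSignedMeasure -
                 (Measure.dirac (-(1 / (n : ℝ) ^ 2))).toSignedMeasure)
    (∀ᶠ n in atTop, sNorm a b (μseq n) = ENNReal.ofReal (2 * b * (n : ℝ) / (n : ℝ) ^ 2)) ∧
    Tendsto (fun n => sNorm a b (μseq n)) atTop (nhds 0) ∧
    (∀ n : ℕ, 1 ≤ n → (μseq n).totalVariation Set.univ = ENNReal.ofReal (2 * (n : ℝ))) ∧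
    ¬ ∃ C : ℝ≥0∞, C ≠ ⊤ ∧ ∀ n, (μseq n).totalVariation Set.univ ≤ C := by
  intro μseq
  have hxy : ∀ n : ℕ, 1 ≤ n → (1 / (n : ℝ) ^ 2) ≠ (-(1 / (n : ℝ) ^ 2)) := by
    intro n hn
    have hn' : (0 : ℝ) < (n : ℝ) := by exact_mod_cast hn
    have h0 : (0 : ℝ) < 1 / (n : ℝ) ^ 2 := by positivity
    intro h; rw [h] at h0; linarith
  have hdist : ∀ n : ℕ, 1 ≤ n →
      dist (1 / (n : ℝ) ^ 2) (-(1 / (n : ℝ) ^ 2)) = 2 / (n : ℝ) ^ 2 := by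
    intro n hn
    have hn' : (0 : ℝ) < (n : ℝ) := by exact_mod_cast hn
    have hsub : (1 / (n : ℝ) ^ 2) - (-(1 / (n : ℝ) ^ 2)) = 2 / (n : ℝ) ^ 2 := by ring
    rw [Real.dist_eq, hsub, abs_of_pos (by positivity)]
  have hμseq : ∀ (n : ℕ) (hn : 1 ≤ n), (μseq n).toJordanDecomposition =
      jdOf (1 / (n : ℝ) ^ 2) (-(1 / (n : ℝ) ^ 2)) (hxy n hn) (n : ℝ≥0) := by
    intro n hn
    exact jd_eq' (1 / (n : ℝ) ^ 2) (-(1 / (n : ℝ) ^ 2)) (hxy n hn) n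
  -- part 1
  have part1 : ∀ᶠ n in atTop,
      sNorm a b (μseq n) = ENNReal.ofReal (2 * b * (n : ℝ) / (n : ℝ) ^ 2) := by
    have hpow : Tendsto (fun n : ℕ => ((n : ℝ) ^ 2)) atTop atTop :=
      (tendsto_pow_atTop two_ne_zero).comp tendsto_natCast_atTop_atTop
    have htend : Tendsto (fun n : ℕ => b * (2 / (n : ℝ) ^ 2)) atTop (nhds 0) := by
      have h2 : Tendsto (fun n : ℕ => (2 * b) / ((n : ℝ) ^ 2)) atTop (nhds 0) :=
        tendsto_const_nhds.div_atTop hpow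
      refine h2.congr fun n => by ring
    have hcond : ∀ᶠ n : ℕ in atTop, b * (2 / (n : ℝ) ^ 2) < 2 * a :=
      htend.eventually_lt_const (by linarith)
    filter_upwards [eventually_ge_atTop 1, hcond] with n hn hcn
    have hn' : (0 : ℝ) < (n : ℝ) := by exact_mod_cast hn
    have hcn' : b * dist (1 / (n : ℝ) ^ 2) (-(1 / (n : ℝ) ^ 2)) ≤ 2 * a := by
      rw [hdist n hn]; exact hcn.le
    rw [sNorm, hμseq n hn]
    have hpos : (jdOf (1 / (n : ℝ) ^ 2) (-(1 / (n : ℝ) ^ 2)) (hxy n hn) (n : ℝ≥0)).posPart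
        = (n : ℝ≥0) • Measure.dirac (1 / (n : ℝ) ^ 2) := rfl
    have hneg : (jdOf (1 / (n : ℝ) ^ 2) (-(1 / (n : ℝ) ^ 2)) (hxy n hn) (n : ℝ≥0)).negPart
        = (n : ℝ≥0) • Measure.dirac (-(1 / (n : ℝ) ^ 2)) := rfl
    rw [hpos, hneg, genW_eq a b ha hb (hxy n hn) (n : ℝ≥0) hcn', edist_dist, hdist n hn]
    rw [show (((n : ℝ≥0) : ℝ≥0∞)) = ENNReal.ofReal (n : ℝ) by
      simp [ENNReal.ofReal_natCast]]
    rw [← ENNReal.ofReal_mul (by positivity), ← ENNReal.ofReal_mul hb.le]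
    congr 1
    field_simp
  -- part 3
  have part3 : ∀ n : ℕ, 1 ≤ n →
      (μseq n).totalVariation Set.univ = ENNReal.ofReal (2 * (n : ℝ)) := by
    intro n hn
    rw [MeasureTheory.SignedMeasure.totalVariation, hμseq n hn]
    have h2n : (2 * (n : ℝ)) = ((2 * n : ℕ) : ℝ) := by push_cast; ring
    rw [h2n, ENNReal.ofReal_natCast]
    show (((n : ℝ≥0) • Measure.dirac (1 / (n : ℝ) ^ 2) +
        (n : ℝ≥0) • Measure.dirac (-(1 / (n : ℝ) ^ 2)) : Measure ℝ)) Set.univ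
        = ((2 * n : ℕ) : ℝ≥0∞)
    simp [ENNReal.smul_def]
    push_cast
    ring
  refine ⟨part1, ?_, part3, ?_⟩
  -- part 2
  · have htendr : Tendsto (fun n : ℕ => 2 * b * (n : ℝ) / (n : ℝ) ^ 2) atTop (nhds 0) := by
      have hbase : Tendsto (fun n : ℕ => (2 * b) / (n : ℝ)) atTop (nhds 0) :=
        tendsto_const_nhds.div_atTop tendsto_natCast_atTop_atTop
      refine Tendsto.congr' ?_ hbase
      filter_upwards [eventually_ge_atTop 1] with n hn
      have hn' : (0 : ℝ) < (n : ℝ) := by exact_mod_cast hn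
      field_simp
    have h0 : Tendsto (fun n : ℕ => ENNReal.ofReal (2 * b * (n : ℝ) / (n : ℝ) ^ 2))
        atTop (nhds 0) := by
      have := ENNReal.tendsto_ofReal htendr
      rwa [ENNReal.ofReal_zero] at this
    exact h0.congr' (part1.mono fun n h => h.symm)
  -- part 4
  · rintro ⟨C, hC, hCle⟩
    obtain ⟨k, hk⟩ := ENNReal.exists_nat_gt (lt_top_iff_ne_top.2 hC).ne
    have h3 := part3 (k + 1) (by omega)
    have hge : ((k : ℝ≥0∞)) ≤ (μseq (k + 1)).totalVariation Set.univ := by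
      rw [h3, show (2 * ((k + 1 : ℕ) : ℝ)) = ((2 * (k + 1) : ℕ) : ℝ) by push_cast; ring,
        ENNReal.ofReal_natCast]
      exact Nat.cast_le.2 (by omega)
    exact absurd (hCle (k + 1)) (not_le.2 (lt_of_lt_of_le hk hge))
end

section
/- If μ_n is a sequence of finite signed Radon measures with ‖μ_n‖^{a,b} → 0, then the difference of masses of the Jordan parts vanishes: |μ_n⁺|(ℝ^d) − |μ_n⁻|(ℝ^d) → 0, i.e. μ_n(ℝ^d) → 0. -/
open MeasureTheory ENNReal Filter

lemma tv_lower {X : Type*} [MeasurableSpace X] [MetricSpace X]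
    (μ ν : Measure X) (hμ : μ Set.univ ≠ ∞) :
    (μ Set.univ - ν Set.univ) + (ν Set.univ - μ Set.univ) ≤ tvMass μ ν := by
  have h1 : (μ ⊓ ν) Set.univ ≤ μ Set.univ ⊓ ν Set.univ :=
    le_inf (Measure.le_iff'.mp inf_le_left _) (Measure.le_iff'.mp inf_le_right _)
  refine le_trans ?_ (tsub_le_tsub_left (mul_le_mul_right h1 2) _)
  set x := μ Set.univ; set s := ν Set.univ
  rcases le_total x s with hle | hle
  · rw [inf_eq_left.mpr hle, tsub_eq_zero_of_le hle, zero_add, two_mul,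
      tsub_add_eq_tsub_tsub, ENNReal.add_sub_cancel_left hμ]
  · rw [inf_eq_right.mpr hle, tsub_eq_zero_of_le hle, add_zero, two_mul,
      tsub_add_eq_tsub_tsub, ENNReal.add_sub_cancel_right (ne_top_of_le_ne_top hμ hle)]

lemma key_lower {X : Type*} [MeasurableSpace X] [MetricSpace X] (a b : ℝ) (hb : 0 ≤ b)
    (μ ν : Measure X) [IsFiniteMeasure μ] [IsFiniteMeasure ν] :
    ENNReal.ofReal a * ((μ Set.univ - ν Set.univ) + (ν Set.univ - μ Set.univ))
      ≤ genW a b μ ν := by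
  refine le_iInf fun μ' => le_iInf fun ν' => le_iInf fun hmn => ?_
  refine le_trans (le_trans ?_ (le_self_add)) le_rfl
  refine mul_le_mul_right ?_ _
  have h1 := tv_lower μ μ' (measure_ne_top μ _)
  have h2 := tv_lower ν ν' (measure_ne_top ν _)
  refine le_trans ?_ (add_le_add h1 h2)
  set x := μ Set.univ; set y := ν Set.univ; set s := μ' Set.univ
  rw [← hmn]
  calc x - y + (y - x) ≤ ((x - s) + (s - y)) + ((y - s) + (s - x)) :=
        add_le_add tsub_le_tsub_add_tsub tsub_le_tsub_add_tsub
    _ = (x - s + (s - x)) + (y - s + (s - y)) := by ring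

lemma abs_toReal (p q : ℝ≥0∞) (hp : p ≠ ∞) (hq : q ≠ ∞) :
    ((p - q) + (q - p)).toReal = |p.toReal - q.toReal| := by
  rcases le_total p q with hle | hle
  · rw [tsub_eq_zero_of_le hle, zero_add, ENNReal.toReal_sub_of_le hle hq,
      abs_sub_comm, abs_of_nonneg (by linarith [ENNReal.toReal_mono hq hle])]
  · rw [tsub_eq_zero_of_le hle, add_zero, ENNReal.toReal_sub_of_le hle hp,
      abs_of_nonneg (by linarith [ENNReal.toReal_mono hp hle])]

/-- if `‖μ_n‖^{a,b} → 0` then `|μ_n⁺|(ℝ^d) - |μ_n⁻|(ℝ^d) → 0`. -/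
theorem stmt15 {d : ℕ} (a b : ℝ) (ha : 0 < a) (hb : 0 < b)
    (μ : ℕ → SignedMeasure (Euc d))
    (h : Tendsto (fun n => sNorm a b (μ n)) atTop (nhds 0)) :
    Tendsto (fun n =>
      ((μ n).toJordanDecomposition.posPart Set.univ).toReal -
      ((μ n).toJordanDecomposition.negPart Set.univ).toReal) atTop (nhds 0) := by
  set f : ℕ → ℝ≥0∞ := fun n => (μ n).toJordanDecomposition.posPart Set.univ with hf
  set g : ℕ → ℝ≥0∞ := fun n => (μ n).toJordanDecomposition.negPart Set.univ with hg
  set D : ℕ → ℝ≥0∞ := fun n => (f n - g n) + (g n - f n) with hDdef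
  have ha0 : ENNReal.ofReal a ≠ 0 := by simp [ENNReal.ofReal_eq_zero]; linarith
  have hkey : ∀ n, D n ≤ sNorm a b (μ n) / ENNReal.ofReal a := by
    intro n
    rw [ENNReal.le_div_iff_mul_le (Or.inl ha0) (Or.inl ENNReal.ofReal_ne_top), mul_comm]
    exact key_lower a b hb.le _ _
  have hdiv : Tendsto (fun n => sNorm a b (μ n) / ENNReal.ofReal a) atTop (nhds 0) := by
    have := ENNReal.Tendsto.mul_const (b := (ENNReal.ofReal a)⁻¹) h
      (Or.inr (by simp [ha0]))
    simpa [div_eq_mul_inv] using this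
  have hD : Tendsto D atTop (nhds 0) :=
    tendsto_of_tendsto_of_tendsto_of_le_of_le tendsto_const_nhds hdiv
      (fun n => zero_le) hkey
  have hDr : Tendsto (fun n => (D n).toReal) atTop (nhds 0) := by
    have := (ENNReal.tendsto_toReal (a := 0) (by simp)).comp hD
    simpa [Function.comp_def] using this
  rw [tendsto_zero_iff_abs_tendsto_zero]
  convert hDr using 2 with n
  rw [hDdef]
  exact (abs_toReal (f n) (g n) (measure_ne_top _ _) (measure_ne_top _ _)).symm
end
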